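/- Let G be a non-abelian finite group with non-trivial center Z(G). Then |Cent(G)| ≤ |G|/2, with equality if and only if G is an extraspecial 2-group. -/

import Mathlib

/-- The set of element centralizers of a group `G`. -/
def centSet (G : Type*) [Group G] : Set (Subgroup G) :=
  Set.range fun x : G => Subgroup.centralizer {x}

/-- A finite `p`-group is extraspecial if its commutator subgroup equals its center and the
center has order `p`. -/
def IsExtraspecial (p : ℕ) (G : Type*) [Group G] : Prop :=
  Finite G ∧ IsPGroup p G ∧ commutator G = Subgroup.center G ∧
    Nat.card (Subgroup.center G) = p

section Aux

open Subgroup Function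
open scoped commutatorElement

variable {G : Type*} [Group G]

lemma cent_eq_of_rel {x y : G} (h : x⁻¹ * y ∈ Subgroup.center G) :
    Subgroup.centralizer ({x} : Set G) = Subgroup.centralizer ({y} : Set G) := by
  have hc : ∀ g : G, Commute g (x⁻¹ * y) := fun g => Subgroup.mem_center_iff.mp h g
  ext g
  simp only [Subgroup.mem_centralizer_singleton_iff]
  constructor
  · intro hg
    have h2 : Commute g (x * (x⁻¹ * y)) := Commute.mul_right hg (hc g)
    have hy : x * (x⁻¹ * y) = y := by group
    rwa [hy] at h2
  · intro hg
    have h2 : Commute g (y * (x⁻¹ * y)⁻¹) := Commute.mul_right hg (hc g).inv_right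
    have hx : y * (x⁻¹ * y)⁻¹ = x := by group
    rwa [hx] at h2

/-- The centralizer map factored through the quotient by the center. -/
noncomputable def centMap (G : Type*) [Group G] : G ⧸ Subgroup.center G → Subgroup G :=
  Quotient.lift (fun x : G => Subgroup.centralizer ({x} : Set G))
    (fun _ _ h => cent_eq_of_rel (QuotientGroup.leftRel_apply.mp h))

lemma centMap_mk (x : G) : centMap G (QuotientGroup.mk x) = Subgroup.centralizer {x} := rfl

lemma range_centMap : Set.range (centMap G) = centSet G := by
  rw [centSet]
  have hs : Function.Surjective (QuotientGroup.mk : G → G ⧸ Subgroup.center G) :=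
    QuotientGroup.mk_surjective
  rw [← hs.range_comp (centMap G)]
  rfl

lemma ncard_centSet_eq (G : Type*) [Group G] :
    (centSet G).ncard = Nat.card (Set.range (centMap G)) := by
  rw [range_centMap, Nat.card_coe_set_eq]

/-- In a group whose commutator subgroup equals its center of order 2, equal centralizers
force equality modulo the center. -/
lemma cent_inj_of_extraspecial (hcomm : commutator G = Subgroup.center G)
    (hcard : Nat.card (Subgroup.center G) = 2) {x y : G}
    (hxy : Subgroup.centralizer ({x} : Set G) = Subgroup.centralizer ({y} : Set G)) :
    x⁻¹ * y ∈ Subgroup.center G := by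
  by_cases hx : ∀ g : G, g ∈ Subgroup.centralizer ({x} : Set G)
  · -- x is central, hence so is y
    have hxc : x ∈ Subgroup.center G := by
      rw [Subgroup.mem_center_iff]
      exact fun g => Subgroup.mem_centralizer_singleton_iff.mp (hx g)
    have hyc : y ∈ Subgroup.center G := by
      rw [Subgroup.mem_center_iff]
      exact fun g => Subgroup.mem_centralizer_singleton_iff.mp (hxy ▸ hx g)
    exact mul_mem (inv_mem hxc) hyc
  · push_neg at hx
    rw [Subgroup.mem_center_iff]
    intro g
    by_cases hg : g ∈ Subgroup.centralizer ({x} : Set G)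
    · have h1 : Commute g x := Subgroup.mem_centralizer_singleton_iff.mp hg
      have h2 : Commute g y := Subgroup.mem_centralizer_singleton_iff.mp (hxy ▸ hg)
      exact (Commute.mul_right h1.inv_right h2)
    · -- g commutes with neither x nor y; both commutators equal the unique
      -- nontrivial central element
      have hgy : g ∉ Subgroup.centralizer ({y} : Set G) := hxy ▸ hg
      have hcx : ⁅g, x⁆ ∈ Subgroup.center G := by
        rw [← hcomm, _root_.commutator_def]
        exact Subgroup.commutator_mem_commutator (Subgroup.mem_top g) (Subgroup.mem_top x)
      have hcy : ⁅g, y⁆ ∈ Subgroup.center G := by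
        rw [← hcomm, _root_.commutator_def]
        exact Subgroup.commutator_mem_commutator (Subgroup.mem_top g) (Subgroup.mem_top y)
      have hnx : ⁅g, x⁆ ≠ 1 := by
        rw [Ne, commutatorElement_eq_one_iff_mul_comm]
        exact fun hgx => hg (Subgroup.mem_centralizer_singleton_iff.mpr hgx)
      have hny : ⁅g, y⁆ ≠ 1 := by
        rw [Ne, commutatorElement_eq_one_iff_mul_comm]
        exact fun hgy' => hgy (Subgroup.mem_centralizer_singleton_iff.mpr hgy')
      -- uniqueness of the nontrivial element in a group of order 2
      obtain ⟨z, -, hz⟩ := (Nat.card_eq_two_iff' (1 : Subgroup.center G)).mp hcard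
      have hxz : (⟨⁅g, x⁆, hcx⟩ : Subgroup.center G) = z :=
        hz _ (by simpa using hnx)
      have hyz : (⟨⁅g, y⁆, hcy⟩ : Subgroup.center G) = z :=
        hz _ (by simpa using hny)
      have hce : ⁅g, x⁆ = ⁅g, y⁆ := by
        have := hxz.trans hyz.symm
        simpa using congrArg (fun t : Subgroup.center G => (t : G)) this
      -- from equal commutators, conclude commutation
      rw [commutatorElement_def, commutatorElement_def] at hce
      have key : g⁻¹ * (x⁻¹ * y) = (x⁻¹ * y) * g⁻¹ := by
        have h1 : x * g⁻¹ * x⁻¹ = y * g⁻¹ * y⁻¹ := by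
          have := congrArg (fun t => g⁻¹ * t) hce
          simpa [mul_assoc] using this
        have h2 : g⁻¹ * x⁻¹ = x⁻¹ * (y * g⁻¹ * y⁻¹) := by
          have := congrArg (fun t => x⁻¹ * t) h1
          simpa [mul_assoc] using this
        have := congrArg (fun t => t * y) h2
        simpa [mul_assoc] using this
      have : Commute g⁻¹ (x⁻¹ * y) := key
      simpa using this.inv_left.eq

end Aux

open Subgroup Function
open scoped commutatorElement

/-- A non-abelian finite group with non-trivial center satisfies `|Cent(G)| ≤ |G|/2`, with
equality iff `G` is an extraspecial `2`-group. -/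
theorem stmt16 (G : Type*) [Group G] [Finite G]
    (hG : ¬∀ a b : G, a * b = b * a)
    (hZ : Subgroup.center G ≠ ⊥) :
    ((centSet G).ncard : ℝ) ≤ (Nat.card G : ℝ) / 2 ∧
      (((centSet G).ncard : ℝ) = (Nat.card G : ℝ) / 2 ↔ IsExtraspecial 2 G) := by
  classical
  set Z := Subgroup.center G with hZdef
  have hq : Nat.card G = Nat.card (G ⧸ Z) * Nat.card Z :=
    Subgroup.card_eq_card_quotient_mul_card_subgroup Z
  have hz2 : 2 ≤ Nat.card Z := (Subgroup.one_lt_card_iff_ne_bot Z).mpr hZ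
  have hcle : (centSet G).ncard ≤ Nat.card (G ⧸ Z) := by
    rw [ncard_centSet_eq]
    exact Finite.card_range_le _
  have hqpos : 0 < Nat.card (G ⧸ Z) := Nat.card_pos
  -- the basic counting bound, in ℕ: 2 * |Cent G| ≤ |G|
  have hmain : 2 * (centSet G).ncard ≤ Nat.card G := by
    calc 2 * (centSet G).ncard ≤ 2 * Nat.card (G ⧸ Z) := by omega
    _ ≤ Nat.card Z * Nat.card (G ⧸ Z) := Nat.mul_le_mul_right _ hz2
    _ = Nat.card G := by rw [hq, mul_comm]
  constructor
  · rw [le_div_iff₀ (by norm_num : (0:ℝ) < 2)]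
    calc ((centSet G).ncard : ℝ) * 2 = ((2 * (centSet G).ncard : ℕ) : ℝ) := by
          push_cast; ring
    _ ≤ (Nat.card G : ℝ) := by exact_mod_cast hmain
  · constructor
    · -- equality implies extraspecial
      intro hEq
      have hnat : 2 * (centSet G).ncard = Nat.card G := by
        have : ((2 * (centSet G).ncard : ℕ) : ℝ) = (Nat.card G : ℝ) := by
          push_cast
          rw [mul_comm]
          field_simp at hEq ⊢
          linarith [hEq]
        exact_mod_cast this
      -- deduce |Z| = 2 and |Cent G| = |G ⧸ Z|
      have hZ2 : Nat.card Z = 2 := by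
        have h1 : 2 * (centSet G).ncard ≤ 2 * Nat.card (G ⧸ Z) := by omega
        have h2 : Nat.card Z * Nat.card (G ⧸ Z) = 2 * (centSet G).ncard := by
          rw [hnat, hq, mul_comm]
        nlinarith [hcle, hqpos, hz2]
      have hceq : (centSet G).ncard = Nat.card (G ⧸ Z) := by
        have : Nat.card G = 2 * Nat.card (G ⧸ Z) := by rw [hq, hZ2, mul_comm]
        omega
      -- the centralizer map on the quotient is injective
      have hinj : Function.Injective (centMap G) := by
        have hsurj : Function.Surjective (Set.rangeFactorization (centMap G)) :=
          Set.rangeFactorization_surjective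
        have hcard_le : Nat.card (G ⧸ Z) ≤ Nat.card (Set.range (centMap G)) := by
          rw [← ncard_centSet_eq, hceq]
        have hbij := hsurj.bijective_of_nat_card_le hcard_le
        intro a b hab
        exact hbij.injective (Subtype.ext hab)
      -- every square is central
      have hsq : ∀ x : G, x * x ∈ Z := by
        intro x
        have hcent : Subgroup.centralizer ({x⁻¹} : Set G) =
            Subgroup.centralizer ({x} : Set G) := by
          ext g
          simp only [Subgroup.mem_centralizer_singleton_iff]
          constructor
          · intro h
            have : Commute g x⁻¹ := h
            simpa using this.inv_right.eq
          · intro h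
            exact (Commute.inv_right h)
        have : (QuotientGroup.mk x⁻¹ : G ⧸ Z) = QuotientGroup.mk x := by
          apply hinj
          rw [centMap_mk, centMap_mk, hcent]
        have h2 : (x⁻¹)⁻¹ * x ∈ Z := QuotientGroup.eq.mp this
        simpa using h2
      -- commutators are central
      have hcommle : commutator G ≤ Z := by
        rw [_root_.commutator_def, Subgroup.commutator_le]
        intro a _ b _
        have key : (QuotientGroup.mk (⁅a, b⁆ : G) : G ⧸ Z) = 1 := by
          have hsq' : ∀ u : G ⧸ Z, u * u = 1 := by
            intro u
            induction u using QuotientGroup.induction_on with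
            | H v =>
              rw [← QuotientGroup.mk_mul, QuotientGroup.eq_one_iff]
              exact hsq v
          have habc : ∀ u : G ⧸ Z, u⁻¹ = u := fun u =>
            inv_eq_of_mul_eq_one_right (hsq' u)
          have hq2 : ∀ u v : G ⧸ Z, u * v = v * u := by
            intro u v
            calc u * v = (u * v)⁻¹ := (habc _).symm
            _ = v⁻¹ * u⁻¹ := by rw [mul_inv_rev]
            _ = v * u := by rw [habc, habc]
          have key2 : (QuotientGroup.mk' Z) ⁅a, b⁆ = 1 := by
            rw [map_commutatorElement, commutatorElement_eq_one_iff_mul_comm]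
            exact hq2 _ _
          exact key2
        exact (QuotientGroup.eq_one_iff _).mp key
      -- commutator subgroup is non-trivial
      have hcomm_ne : commutator G ≠ ⊥ := by
        intro hbot
        apply hG
        intro a b
        have : ⁅a, b⁆ ∈ commutator G := by
          rw [_root_.commutator_def]
          exact Subgroup.commutator_mem_commutator (Subgroup.mem_top a) (Subgroup.mem_top b)
        rw [hbot, Subgroup.mem_bot, commutatorElement_eq_one_iff_mul_comm] at this
        exact this
      have hcommZ : commutator G = Z := by
        apply Subgroup.eq_of_le_of_card_ge hcommle
        have hdvd : Nat.card (commutator G) ∣ Nat.card Z :=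
          Subgroup.card_dvd_of_le hcommle
        have hgt : 1 < Nat.card (commutator G) :=
          (Subgroup.one_lt_card_iff_ne_bot _).mpr hcomm_ne
        rw [hZ2] at hdvd ⊢
        have hle2 := Nat.le_of_dvd (by norm_num) hdvd
        omega
      -- G is a 2-group
      have hp2 : IsPGroup 2 G := by
        intro g
        refine ⟨2, ?_⟩
        have h1 : g * g ∈ Z := hsq g
        have h2 : (⟨g * g, h1⟩ : Z) ^ 2 = 1 := by
          have := pow_card_eq_one' (G := Z) (x := ⟨g * g, h1⟩)
          rwa [hZ2] at this
        have h3 : (g * g) ^ 2 = 1 := by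
          have := congrArg (fun t : Z => (t : G)) h2
          simpa using this
        show g ^ 2 ^ 2 = 1
        rw [show (2:ℕ) ^ 2 = 2 * 2 by norm_num, pow_mul]
        simp only [pow_two] at h3 ⊢
        exact h3
      exact ⟨inferInstance, hp2, hcommZ, hZ2⟩
    · -- extraspecial implies equality
      rintro ⟨-, -, hcomm, hcard⟩
      have hinj : Function.Injective (centMap G) := by
        intro a b
        induction a using QuotientGroup.induction_on with
        | H x =>
          induction b using QuotientGroup.induction_on with
          | H y =>
            intro hab
            rw [centMap_mk, centMap_mk] at hab
            exact QuotientGroup.eq.mpr (cent_inj_of_extraspecial hcomm hcard hab)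
      have hceq : (centSet G).ncard = Nat.card (G ⧸ Z) := by
        rw [ncard_centSet_eq, Nat.card_range_of_injective hinj]
      have hG2 : Nat.card G = 2 * Nat.card (G ⧸ Z) := by
        rw [hq, hcard, mul_comm]
      rw [hceq, hG2]
      push_cast
      ring
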